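/- Error of Clenshaw–Curtis quadrature on even Chebyshev polynomials: let n ≥ 2, let j ≥ 1 and r be integers with |2r| ≤ n−1, and set m = 2j(n−1)+2r (so m is even and m ≥ n−1 > 1). Then the n-point Clenshaw–Curtis rule satisfies ∑_{k=1}^n w_k T_m(x_k) = ∫_{−1}^1 T_{2|r|}(x) dx = −2/(4r²−1), and hence its error on T_m equals E_n^C(T_m) = −2/(m²−1) + 2/(4r²−1). -/

import Mathlib

open Polynomial Polynomial.Chebyshev Real

lemma U_sub_U (n : ℤ) : U ℝ n - U ℝ (n-2) = 2 * T ℝ n := by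
  rw [U_sub_two, T_eq_U_sub_X_mul_U]; ring

lemma poly_ftc (p : ℝ[X]) : ∫ x in (-1:ℝ)..1, (derivative p).eval x = p.eval 1 - p.eval (-1) := by
  refine intervalIntegral.integral_eq_sub_of_hasDerivAt (fun x _ => p.hasDerivAt x) ?_
  exact ((derivative p).continuous_aeval).intervalIntegrable _ _

lemma T_eval_one (k : ℤ) : (T ℝ k).eval 1 = 1 := by
  simpa using T_real_cos 0 k

lemma T_eval_neg_one_odd (t : ℤ) : (T ℝ (2*t+1)).eval (-1) = -1 := by
  have h := T_real_cos π (2*t+1)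
  rw [Real.cos_pi] at h
  rw [h, show ((2*t+1 : ℤ):ℝ) * π = π + t * (2*π) by push_cast; ring,
    Real.cos_add_int_mul_two_pi, Real.cos_pi]

lemma integral_T_even (c : ℤ) (hc : Even c) :
    ∫ x in (-1:ℝ)..1, (T ℝ c).eval x = -2 / ((c:ℝ)^2 - 1) := by
  obtain ⟨t, ht⟩ := hc
  have h1 : (c:ℝ) + 1 ≠ 0 := by
    intro h
    have : c = -1 := by exact_mod_cast (by linarith : (c:ℝ) = -1)
    omega
  have h2 : (c:ℝ) - 1 ≠ 0 := by
    intro h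
    have : c = 1 := by exact_mod_cast (by linarith : (c:ℝ) = 1)
    omega
  set P : ℝ[X] := C ((2*((c:ℝ)+1))⁻¹) * T ℝ (c+1) - C ((2*((c:ℝ)-1))⁻¹) * T ℝ (c-1) with hP
  have a1 : (2*((c:ℝ)+1))⁻¹ * ((c:ℝ)+1) = 2⁻¹ := by field_simp
  have a2 : (2*((c:ℝ)-1))⁻¹ * ((c:ℝ)-1) = 2⁻¹ := by field_simp
  have hd : derivative P = T ℝ c := by
    rw [hP, derivative_sub, derivative_C_mul, derivative_C_mul,
      T_derivative_eq_U, T_derivative_eq_U,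
      show ((c+1 : ℤ) : ℝ[X]) = C ((c:ℝ)+1) by simp [Polynomial.C_eq_intCast],
      show ((c-1 : ℤ) : ℝ[X]) = C ((c:ℝ)-1) by simp [Polynomial.C_eq_intCast],
      show (c+1-1 : ℤ) = c by ring, show (c-1-1 : ℤ) = c-2 by ring,
      ← mul_assoc, ← Polynomial.C_mul, a1, ← mul_assoc, ← Polynomial.C_mul, a2, ← mul_sub, U_sub_U,
      ← mul_assoc, show (C (2⁻¹:ℝ) * 2 : ℝ[X]) = 1 by rw [show (2:ℝ[X]) = C 2 from (map_ofNat Polynomial.C 2).symm, ← Polynomial.C_mul]; norm_num, one_mul]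
  rw [← hd, poly_ftc, hP]
  have ho1 : (c+1 : ℤ) = 2*t+1 := by omega
  have ho2 : (c-1 : ℤ) = 2*(t-1)+1 := by omega
  simp only [eval_sub, eval_mul, eval_C, _root_.T_eval_one, ho1, ho2, T_eval_neg_one_odd]
  have hc2 : (c:ℝ)^2 - 1 = ((c:ℝ)+1) * ((c:ℝ)-1) := by ring
  rw [hc2]
  field_simp
  ring
lemma natDegree_T_le : ∀ N : ℕ, (T ℝ (N:ℤ)).natDegree ≤ N := by
  intro N
  induction N using Nat.strong_induction_on with
  | _ N ih =>
    match N with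
    | 0 => simp [T_zero]
    | 1 => simp [T_one]
    | (N+2) =>
      have h := T_add_two ℝ (N:ℤ)
      rw [show ((N+2:ℕ):ℤ) = (N:ℤ)+2 by push_cast; ring, h]
      refine le_trans (natDegree_sub_le _ _) (max_le ?_ ?_)
      · refine le_trans (natDegree_mul_le) ?_
        have h1 : (2 * X : ℝ[X]).natDegree ≤ 1 := by
          refine le_trans natDegree_mul_le ?_; simp
        have h2 : (T ℝ ((N:ℤ)+1)).natDegree ≤ N+1 := by
          have := ih (N+1) (by omega)
          rwa [show (((N+1:ℕ)):ℤ) = (N:ℤ)+1 by push_cast; ring] at this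
        omega
      · exact le_trans (ih N (by omega)) (by omega)

/-- Error of the `n`-point Clenshaw–Curtis rule on even Chebyshev polynomials:
for `m = 2j(n-1) + 2r` with `j ≥ 1` and `|2r| ≤ n-1`, the rule applied to `T_m` yields
`∫_{-1}^1 T_{2|r|}(x) dx = -2/(4r²-1)`, and hence
`E_n^C(T_m) = -2/(m²-1) + 2/(4r²-1)`. -/
theorem cc_error_chebyshev (n : ℕ) (hn : 2 ≤ n) (j : ℕ) (hj : 1 ≤ j) (r : ℤ)
    (hr : 2 * |r| ≤ (n : ℤ) - 1) (m : ℤ) (hm : m = 2 * (j : ℤ) * ((n : ℤ) - 1) + 2 * r)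
    (w : Fin n → ℝ)
    (hw : ∀ p : Polynomial ℝ, p.natDegree ≤ n - 1 →
      ∑ k : Fin n, w k * p.eval (Real.cos ((k : ℝ) * Real.pi / ((n : ℝ) - 1))) =
        ∫ x in (-1:ℝ)..1, p.eval x) :
    (∑ k : Fin n, w k * (Polynomial.Chebyshev.T ℝ m).eval
          (Real.cos ((k : ℝ) * Real.pi / ((n : ℝ) - 1))) =
        ∫ x in (-1:ℝ)..1, (Polynomial.Chebyshev.T ℝ (2 * |r|)).eval x) ∧
    (∫ x in (-1:ℝ)..1, (Polynomial.Chebyshev.T ℝ (2 * |r|)).eval x) =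
        -2 / (4 * (r : ℝ) ^ 2 - 1) ∧
    (∫ x in (-1:ℝ)..1, (Polynomial.Chebyshev.T ℝ m).eval x) -
        (∑ k : Fin n, w k * (Polynomial.Chebyshev.T ℝ m).eval
          (Real.cos ((k : ℝ) * Real.pi / ((n : ℝ) - 1)))) =
      -2 / ((m : ℝ) ^ 2 - 1) + 2 / (4 * (r : ℝ) ^ 2 - 1) := by
  have hn1 : (n:ℝ) - 1 ≠ 0 := by
    have : (2:ℝ) ≤ (n:ℝ) := by exact_mod_cast hn
    intro h; linarith
  -- node values coincide
  have hnode : ∀ k : Fin n,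
      (T ℝ m).eval (Real.cos ((k : ℝ) * π / ((n : ℝ) - 1))) =
      (T ℝ (2 * |r|)).eval (Real.cos ((k : ℝ) * π / ((n : ℝ) - 1))) := by
    intro k
    set θ : ℝ := (k : ℝ) * π / ((n : ℝ) - 1) with hθ
    rw [T_real_cos, T_real_cos]
    have key : (m:ℝ) * θ = (2*(r:ℝ))*θ + (((j:ℤ)*(k:ℤ) : ℤ):ℝ) * (2*π) := by
      rw [hθ]
      have hm' : (m:ℝ) = 2*(j:ℝ)*((n:ℝ)-1)+2*(r:ℝ) := by exact_mod_cast hm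
      rw [hm']
      push_cast
      field_simp
      ring
    have h1 : Real.cos ((m:ℝ)*θ) = Real.cos ((2*(r:ℝ))*θ) := by
      rw [key]; exact Real.cos_add_int_mul_two_pi _ _
    rw [h1]
    rcases abs_cases r with ⟨h, _⟩ | ⟨h, _⟩
    · rw [h]; congr 1; push_cast; ring
    · rw [h]; push_cast
      rw [show (2*(-(r:ℝ)))*θ = -((2*(r:ℝ))*θ) by ring, Real.cos_neg]
  have hsum : ∑ k : Fin n, w k * (T ℝ m).eval (Real.cos ((k : ℝ) * π / ((n : ℝ) - 1))) =
      ∑ k : Fin n, w k * (T ℝ (2*|r|)).eval (Real.cos ((k : ℝ) * π / ((n : ℝ) - 1))) :=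
    Finset.sum_congr rfl (fun k _ => by rw [hnode k])
  have hdeg : (T ℝ (2 * |r|)).natDegree ≤ n - 1 := by
    have h0 : (0:ℤ) ≤ 2 * |r| := by positivity
    rw [show (2*|r| : ℤ) = (((2*|r|).toNat : ℕ) : ℤ) by rw [Int.toNat_of_nonneg h0]]
    refine le_trans (natDegree_T_le _) ?_
    have hs : (0:ℤ) ≤ |r| := abs_nonneg r
    omega
  have P1 : ∑ k : Fin n, w k * (T ℝ m).eval (Real.cos ((k : ℝ) * π / ((n : ℝ) - 1))) =
      ∫ x in (-1:ℝ)..1, (T ℝ (2*|r|)).eval x := hsum.trans (hw _ hdeg)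
  have habs2 : ((2*|r| : ℤ):ℝ)^2 - 1 = 4*(r:ℝ)^2 - 1 := by
    push_cast
    rw [mul_pow, sq_abs]
    norm_num
  have P2 : (∫ x in (-1:ℝ)..1, (T ℝ (2*|r|)).eval x) = -2 / (4*(r:ℝ)^2 - 1) := by
    rw [integral_T_even (2*|r|) ⟨|r|, by ring⟩, habs2]
  have hme : Even m := ⟨(j:ℤ)*((n:ℤ)-1)+r, by rw [hm]; ring⟩
  refine ⟨P1, P2, ?_⟩
  rw [P1, P2, integral_T_even m hme]
  ring
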